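/- Along the P-positions of Rational Nim the heap-size ratio converges to (q₁+q₂)/(p₁+p₂): for every ε > 0 there exists N such that every P-position (A,B) of Rational Nim with A ≥ N satisfies |B/A − (q₁+q₂)/(p₁+p₂)| < ε. -/

import Mathlib

/-- Membership in the set of allowed positions `B_Q`. -/
def inBQ (p1 q1 p2 q2 : ℕ) (pos : ℕ × ℕ) : Prop :=
  pos.1 * q1 ≤ pos.2 * p1 ∧ pos.2 * p2 ≤ pos.1 * q2

/-- Membership in the set `T_Q` (the inequalities are read in ℤ). -/
def inTQ (p1 q1 p2 q2 : ℕ) (pos : ℕ × ℕ) : Prop :=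
  inBQ p1 q1 p2 q2 pos ∧
    (p1 : ℤ) * ((pos.2 : ℤ) - (q2 : ℤ)) < (q1 : ℤ) * ((pos.1 : ℤ) - (p2 : ℤ)) ∧
    (p2 : ℤ) * ((pos.2 : ℤ) - (q1 : ℤ)) > (q2 : ℤ) * ((pos.1 : ℤ) - (p1 : ℤ))

/-- A legal move of the Q-subtraction game `G_Q(M)`. -/
def QMove (p1 q1 p2 q2 : ℕ) (M : Set (ℕ × ℕ)) (pos pos' : ℕ × ℕ) : Prop :=
  ∃ s t : ℕ, (s, t) ∈ M ∧
    p1 * s + p2 * t ≤ pos.1 ∧ q1 * s + q2 * t ≤ pos.2 ∧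
    pos'.1 = pos.1 - (p1 * s + p2 * t) ∧ pos'.2 = pos.2 - (q1 * s + q2 * t) ∧
    inBQ p1 q1 p2 q2 pos'

/-- `pos` is a P-position of the game with move relation `move`: every legal move
leads to a non-P-position.  (Every legal move of the games considered here strictly
decreases the coordinate sum, which makes the recursion well-founded.) -/
def PPos (move : ℕ × ℕ → ℕ × ℕ → Prop) : ℕ × ℕ → Prop
  | pos => ∀ pos', move pos pos' → pos'.1 + pos'.2 < pos.1 + pos.2 → ¬ PPos move pos'
termination_by pos => pos.1 + pos.2

/-- The move set of Rational Nim. -/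
def MRN : Set (ℕ × ℕ) := {m | ∃ t : ℕ, 1 ≤ t ∧ (m = (0, t) ∨ m = (t, 0))}

section
variable {p1 q1 p2 q2 : ℕ}

-- A*D = u*p1 + v*p2  and  B*D = u*q1 + v*q2
lemma AD_eq (hD : q1*p2 ≤ p1*q2) {A B : ℕ} (h1 : A*q1 ≤ B*p1) (h2 : B*p2 ≤ A*q2) :
    A * (p1*q2 - q1*p2) = (A*q2 - B*p2)*p1 + (B*p1 - A*q1)*p2 := by
  zify [hD, h1, h2]; ring

lemma BD_eq (hD : q1*p2 ≤ p1*q2) {A B : ℕ} (h1 : A*q1 ≤ B*p1) (h2 : B*p2 ≤ A*q2) :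
    B * (p1*q2 - q1*p2) = (A*q2 - B*p2)*q1 + (B*p1 - A*q1)*q2 := by
  zify [hD, h1, h2]; ring
end
section
variable {p1 q1 p2 q2 : ℕ}

/-- Construct a direction-1 move (subtract s·(p1,q1)). -/
lemma move_mk1 (hp1 : 0 < p1) (hD : q1*p2 < p1*q2) {A B : ℕ} (hB : inBQ p1 q1 p2 q2 (A,B))
    {s : ℕ} (hs : 1 ≤ s) (hsu : s*(p1*q2 - q1*p2) ≤ A*q2 - B*p2) :
    QMove p1 q1 p2 q2 MRN (A,B) (A - p1*s, B - q1*s) ∧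
    (A - p1*s) + (B - q1*s) < A + B ∧
    (A - p1*s)*q2 - (B - q1*s)*p2 = (A*q2 - B*p2) - s*(p1*q2 - q1*p2) ∧
    (B - q1*s)*p1 - (A - p1*s)*q1 = B*p1 - A*q1 := by
  obtain ⟨h1, h2⟩ := hB
  simp only [inBQ] at h1 h2
  have hD0 : 0 < p1*q2 - q1*p2 := by omega
  have hAD := AD_eq hD.le h1 h2
  have hBD := BD_eq hD.le h1 h2
  -- p1*s ≤ A
  have hpA : p1*s ≤ A := by
    have : (p1*s) * (p1*q2 - q1*p2) ≤ A * (p1*q2 - q1*p2) := by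
      rw [hAD]
      calc p1*s * (p1*q2 - q1*p2) = s*(p1*q2 - q1*p2)*p1 := by ring
        _ ≤ (A*q2 - B*p2)*p1 := Nat.mul_le_mul_right _ hsu
        _ ≤ _ := Nat.le_add_right _ _
    exact Nat.le_of_mul_le_mul_right this hD0
  have hqB : q1*s ≤ B := by
    have : (q1*s) * (p1*q2 - q1*p2) ≤ B * (p1*q2 - q1*p2) := by
      rw [hBD]
      calc q1*s * (p1*q2 - q1*p2) = s*(p1*q2 - q1*p2)*q1 := by ring
        _ ≤ (A*q2 - B*p2)*q1 := Nat.mul_le_mul_right _ hsu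
        _ ≤ _ := Nat.le_add_right _ _
    exact Nat.le_of_mul_le_mul_right this hD0
  have key2 : (B - q1*s)*p2 ≤ (A - p1*s)*q2 := by
    zify [hpA, hqB]
    have : (s:ℤ)*((p1:ℤ)*q2 - q1*p2) ≤ (A:ℤ)*q2 - B*p2 := by
      have := hsu; zify [hD.le, h2] at this; linarith
    nlinarith
  have key1 : (A - p1*s)*q1 ≤ (B - q1*s)*p1 := by
    zify [hpA, hqB]
    have h1' : (A:ℤ)*q1 ≤ B*p1 := by exact_mod_cast h1
    nlinarith
  refine ⟨⟨s, 0, ⟨s, hs, Or.inr rfl⟩, ?_, ?_, ?_, ?_, key1, key2⟩, ?_, ?_, ?_⟩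
  · simpa using hpA
  · simpa using hqB
  · simp
  · simp
  · have : 1 ≤ p1*s := Nat.one_le_iff_ne_zero.mpr (Nat.mul_ne_zero (by omega) (by omega))
    omega
  · zify [hpA, hqB, hD.le, h2, key2, hsu]; ring
  · zify [hpA, hqB, h1, key1]; ring

/-- Construct a direction-2 move (subtract t·(p2,q2)). -/
lemma move_mk2 (hq2 : 0 < q2) (hD : q1*p2 < p1*q2) {A B : ℕ} (hB : inBQ p1 q1 p2 q2 (A,B))
    {t : ℕ} (ht : 1 ≤ t) (htv : t*(p1*q2 - q1*p2) ≤ B*p1 - A*q1) :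
    QMove p1 q1 p2 q2 MRN (A,B) (A - p2*t, B - q2*t) ∧
    (A - p2*t) + (B - q2*t) < A + B ∧
    (B - q2*t)*p1 - (A - p2*t)*q1 = (B*p1 - A*q1) - t*(p1*q2 - q1*p2) ∧
    (A - p2*t)*q2 - (B - q2*t)*p2 = A*q2 - B*p2 := by
  obtain ⟨h1, h2⟩ := hB
  simp only [inBQ] at h1 h2
  have hD0 : 0 < p1*q2 - q1*p2 := by omega
  have hAD := AD_eq hD.le h1 h2
  have hBD := BD_eq hD.le h1 h2
  have hpA : p2*t ≤ A := by
    have : (p2*t) * (p1*q2 - q1*p2) ≤ A * (p1*q2 - q1*p2) := by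
      rw [hAD]
      calc p2*t * (p1*q2 - q1*p2) = t*(p1*q2 - q1*p2)*p2 := by ring
        _ ≤ (B*p1 - A*q1)*p2 := Nat.mul_le_mul_right _ htv
        _ ≤ _ := Nat.le_add_left _ _
    exact Nat.le_of_mul_le_mul_right this hD0
  have hqB : q2*t ≤ B := by
    have : (q2*t) * (p1*q2 - q1*p2) ≤ B * (p1*q2 - q1*p2) := by
      rw [hBD]
      calc q2*t * (p1*q2 - q1*p2) = t*(p1*q2 - q1*p2)*q2 := by ring
        _ ≤ (B*p1 - A*q1)*q2 := Nat.mul_le_mul_right _ htv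
        _ ≤ _ := Nat.le_add_left _ _
    exact Nat.le_of_mul_le_mul_right this hD0
  have key1 : (A - p2*t)*q1 ≤ (B - q2*t)*p1 := by
    zify [hpA, hqB]
    have : (t:ℤ)*((p1:ℤ)*q2 - q1*p2) ≤ (B:ℤ)*p1 - A*q1 := by
      have := htv; zify [hD.le, h1] at this; linarith
    nlinarith
  have key2 : (B - q2*t)*p2 ≤ (A - p2*t)*q2 := by
    zify [hpA, hqB]
    have h2' : (B:ℤ)*p2 ≤ A*q2 := by exact_mod_cast h2
    nlinarith
  refine ⟨⟨0, t, ⟨t, ht, Or.inl rfl⟩, ?_, ?_, ?_, ?_, key1, key2⟩, ?_, ?_, ?_⟩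
  · simpa using hpA
  · simpa using hqB
  · simp
  · simp
  · have : 1 ≤ q2*t := Nat.one_le_iff_ne_zero.mpr (Nat.mul_ne_zero (by omega) (by omega))
    omega
  · zify [hpA, hqB, hD.le, h1, key1, htv]; ring
  · zify [hpA, hqB, h2, key2]; ring
end
section
variable {p1 q1 p2 q2 : ℕ}

lemma move_decomp (hp1 : 0 < p1) (hq2 : 0 < q2) (hD : q1*p2 < p1*q2)
    {A B A' B' : ℕ} (hB : inBQ p1 q1 p2 q2 (A,B))
    (h : QMove p1 q1 p2 q2 MRN (A,B) (A',B')) :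
    inBQ p1 q1 p2 q2 (A',B') ∧ A' + B' < A + B ∧
    ((∃ s, 1 ≤ s ∧ s*(p1*q2 - q1*p2) ≤ A*q2 - B*p2 ∧
        A'*q2 - B'*p2 = (A*q2 - B*p2) - s*(p1*q2 - q1*p2) ∧
        B'*p1 - A'*q1 = B*p1 - A*q1) ∨
     (∃ t, 1 ≤ t ∧ t*(p1*q2 - q1*p2) ≤ B*p1 - A*q1 ∧
        B'*p1 - A'*q1 = (B*p1 - A*q1) - t*(p1*q2 - q1*p2) ∧
        A'*q2 - B'*p2 = A*q2 - B*p2)) := by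
  obtain ⟨h1, h2⟩ := hB
  simp only [inBQ] at h1 h2
  obtain ⟨s, t, ⟨r, hr, hm⟩, hA, hBle, hA', hB', hBQ'⟩ := h
  simp only [Prod.mk.injEq] at hm
  obtain ⟨h1', h2'⟩ := hBQ'
  simp only [inBQ] at h1' h2'
  rcases hm with ⟨hs0, ht⟩ | ⟨hs, ht0⟩
  · -- s = 0, t = r : direction 2
    subst hs0 ht
    simp only [mul_zero, zero_add, Nat.mul_zero] at hA hBle hA' hB'
    subst hA' hB'
    have hpA : p2*t ≤ A := hA
    have hqB : q2*t ≤ B := hBle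
    have hrv : t*(p1*q2 - q1*p2) ≤ B*p1 - A*q1 := by
      have := h1'
      zify [hpA, hqB] at this
      zify [hD.le, h1]
      nlinarith
    have key1 : (A - p2*t)*q1 ≤ (B - q2*t)*p1 := h1'
    have key2 : (B - q2*t)*p2 ≤ (A - p2*t)*q2 := h2'
    refine ⟨⟨h1', h2'⟩, ?_, Or.inr ⟨t, hr, hrv, ?_, ?_⟩⟩
    · have : 1 ≤ q2*t := Nat.one_le_iff_ne_zero.mpr (Nat.mul_ne_zero (by omega) (by omega))
      omega
    · zify [hpA, hqB, hD.le, h1, key1, hrv]; ring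
    · zify [hpA, hqB, h2, key2]; ring
  · -- direction 1
    subst hs ht0
    simp only [mul_zero, add_zero, Nat.mul_zero] at hA hBle hA' hB'
    subst hA' hB'
    have hpA : p1*s ≤ A := hA
    have hqB : q1*s ≤ B := hBle
    have hru : s*(p1*q2 - q1*p2) ≤ A*q2 - B*p2 := by
      have := h2'
      zify [hpA, hqB] at this
      zify [hD.le, h2]
      nlinarith
    have key1 : (A - p1*s)*q1 ≤ (B - q1*s)*p1 := h1'
    have key2 : (B - q1*s)*p2 ≤ (A - p1*s)*q2 := h2'
    refine ⟨⟨h1', h2'⟩, ?_, Or.inl ⟨s, hr, hru, ?_, ?_⟩⟩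
    · have : 1 ≤ p1*s := Nat.one_le_iff_ne_zero.mpr (Nat.mul_ne_zero (by omega) (by omega))
      omega
    · zify [hpA, hqB, hD.le, h2, key2, hru]; ring
    · zify [hpA, hqB, h1, key1]; ring
end
section
variable {p1 q1 p2 q2 : ℕ}

lemma ppos_unfold (move : ℕ × ℕ → ℕ × ℕ → Prop) (pos : ℕ × ℕ) :
    PPos move pos ↔
    ∀ pos', move pos pos' → pos'.1 + pos'.2 < pos.1 + pos.2 → ¬ PPos move pos' := by
  rw [PPos]

lemma div_sub_aux {v t D : ℕ} (h : t*D ≤ v) : (v - t*D)/D = v/D - t := by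
  have h' : D*t ≤ v := by rwa [mul_comm] at h
  rw [mul_comm t D, Nat.sub_mul_div _ _ _]

lemma ppos_char (hp1 : 0 < p1) (hq2 : 0 < q2) (hD : q1*p2 < p1*q2) :
    ∀ n A B, A + B = n → inBQ p1 q1 p2 q2 (A,B) →
    (PPos (QMove p1 q1 p2 q2 MRN) (A,B) ↔
      (A*q2 - B*p2) / (p1*q2 - q1*p2) = (B*p1 - A*q1) / (p1*q2 - q1*p2)) := by
  intro n
  induction n using Nat.strong_induction_on with
  | _ n IH =>
  intro A B hn hB
  have hD0 : 0 < p1*q2 - q1*p2 := by omega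
  constructor
  · intro hP
    by_contra hne
    rcases Nat.lt_or_ge ((A*q2 - B*p2)/(p1*q2 - q1*p2)) ((B*p1 - A*q1)/(p1*q2 - q1*p2))
      with hlt | hge
    · -- move direction 2 with t = v/D - u/D
      set D := p1*q2 - q1*p2 with hDdef
      set u := A*q2 - B*p2 with hu
      set v := B*p1 - A*q1 with hv
      set t := v/D - u/D with htdef
      have ht1 : 1 ≤ t := by rw [htdef]; omega
      have htq : t ≤ v/D := Nat.sub_le _ _
      have htv : t*D ≤ v :=
        le_trans (Nat.mul_le_mul_right _ htq) (Nat.div_mul_le_self v D)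
      obtain ⟨hmv, hsum, hv', hu'⟩ := move_mk2 hq2 hD hB ht1 htv
      have hBQ' : inBQ p1 q1 p2 q2 (A - p2*t, B - q2*t) :=
        (move_decomp hp1 hq2 hD hB hmv).1
      have hq' : ((A - p2*t)*q2 - (B - q2*t)*p2) / D = ((B - q2*t)*p1 - (A - p2*t)*q1) / D := by
        rw [hu', hv', div_sub_aux htv, htdef]
        exact (Nat.sub_sub_self hlt.le).symm
      have := (IH _ (by omega) (A - p2*t) (B - q2*t) rfl hBQ').mpr hq'
      exact (ppos_unfold _ _).mp hP _ hmv (by simpa using hsum) this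
    · have hlt : (B*p1 - A*q1)/(p1*q2 - q1*p2) < (A*q2 - B*p2)/(p1*q2 - q1*p2) := by omega
      set D := p1*q2 - q1*p2 with hDdef
      set u := A*q2 - B*p2 with hu
      set v := B*p1 - A*q1 with hv
      set s := u/D - v/D with hsdef
      have hs1 : 1 ≤ s := by rw [hsdef]; omega
      have hsq : s ≤ u/D := Nat.sub_le _ _
      have hsu : s*D ≤ u :=
        le_trans (Nat.mul_le_mul_right _ hsq) (Nat.div_mul_le_self u D)
      obtain ⟨hmv, hsum, hu', hv'⟩ := move_mk1 hp1 hD hB hs1 hsu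
      have hBQ' : inBQ p1 q1 p2 q2 (A - p1*s, B - q1*s) :=
        (move_decomp hp1 hq2 hD hB hmv).1
      have hq' : ((A - p1*s)*q2 - (B - q1*s)*p2) / D = ((B - q1*s)*p1 - (A - p1*s)*q1) / D := by
        rw [hu', hv', div_sub_aux hsu, hsdef]
        exact Nat.sub_sub_self hlt.le
      have := (IH _ (by omega) (A - p1*s) (B - q1*s) rfl hBQ').mpr hq'
      exact (ppos_unfold _ _).mp hP _ hmv (by simpa using hsum) this
  · intro hq
    rw [ppos_unfold]
    rintro ⟨A', B'⟩ hmv hsum hP'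
    obtain ⟨hBQ', hsum', hcase⟩ := move_decomp hp1 hq2 hD hB hmv
    have hq' := (IH _ (by omega) A' B' rfl hBQ').mp hP'
    set D := p1*q2 - q1*p2 with hDdef
    rcases hcase with ⟨s, hs1, hsu, h1, h2⟩ | ⟨t, ht1, htv, h1, h2⟩
    · have hsq : s ≤ (A*q2 - B*p2)/D := by
        rw [Nat.le_div_iff_mul_le hD0]; exact hsu
      rw [h1, h2, div_sub_aux hsu, ← hq] at hq'
      have h0 : 0 < (A*q2 - B*p2)/D := lt_of_lt_of_le hs1 hsq
      exact (Nat.sub_lt h0 hs1).ne hq'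
    · have htq : t ≤ (B*p1 - A*q1)/D := by
        rw [Nat.le_div_iff_mul_le hD0]; exact htv
      rw [h1, h2, div_sub_aux htv, hq] at hq'
      have h0 : 0 < (B*p1 - A*q1)/D := lt_of_lt_of_le ht1 htq
      exact (Nat.sub_lt h0 ht1).ne hq'.symm
end
/-- P-positions satisfy |B(p1+p2) - A(q1+q2)| < D over ℤ. -/
lemma ppos_bound {p1 q1 p2 q2 : ℕ} (hp1 : 0 < p1) (hq2 : 0 < q2) (hD : q1*p2 < p1*q2)
    {A B : ℕ} (hB : inBQ p1 q1 p2 q2 (A,B))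
    (hP : PPos (QMove p1 q1 p2 q2 MRN) (A,B)) :
    |(B:ℤ)*((p1:ℤ)+p2) - (A:ℤ)*((q1:ℤ)+q2)| < (p1:ℤ)*q2 - (q1:ℤ)*p2 := by
  have hq := (ppos_char hp1 hq2 hD (A+B) A B rfl hB).mp hP
  set D := p1*q2 - q1*p2 with hDdef
  have hD0 : 0 < D := by omega
  set u := A*q2 - B*p2 with hu
  set v := B*p1 - A*q1 with hv
  have e1 : D*(u/D) + u%D = u := Nat.div_add_mod u D
  have e2 : D*(v/D) + v%D = v := Nat.div_add_mod v D
  rw [hq] at e1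
  have hm1 : u % D < D := Nat.mod_lt _ hD0
  have hm2 : v % D < D := Nat.mod_lt _ hD0
  have habs : (u:ℤ) - v < D ∧ (v:ℤ) - u < D := by
    constructor <;> [skip; skip] <;>
    · omega
  obtain ⟨h1, h2⟩ := hB
  simp only [inBQ] at h1 h2
  have hvu : (v:ℤ) - u = (B:ℤ)*((p1:ℤ)+p2) - (A:ℤ)*((q1:ℤ)+q2) := by
    rw [hu, hv]
    zify [h1, h2]
    ring
  rw [abs_lt]
  have hDz : (D:ℤ) = (p1:ℤ)*q2 - (q1:ℤ)*p2 := by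
    rw [hDdef]; zify [hD.le]
  constructor <;> [linarith [habs.1, hvu ▸ habs.2]; linarith [hvu ▸ habs.2]]

theorem stmt_12 (p1 q1 p2 q2 : ℕ) (hp1 : 0 < p1) (hq2 : 0 < q2)
    (hD : q1 * p2 < p1 * q2) (ε : ℝ) (hε : 0 < ε) :
    ∃ N : ℕ, ∀ A B : ℕ, inBQ p1 q1 p2 q2 (A, B) →
      PPos (QMove p1 q1 p2 q2 MRN) (A, B) → N ≤ A →
      |(B : ℝ) / (A : ℝ) - ((q1 : ℝ) + (q2 : ℝ)) / ((p1 : ℝ) + (p2 : ℝ))| < ε := by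
  have hP0 : (0:ℝ) < (p1:ℝ) + p2 := by
    have : (0:ℝ) < (p1:ℝ) := by exact_mod_cast hp1
    have : (0:ℝ) ≤ (p2:ℝ) := by positivity
    linarith
  set Dr : ℝ := (p1:ℝ)*q2 - (q1:ℝ)*p2 with hDr
  have hDr0 : 0 < Dr := by
    have : ((q1*p2 : ℕ):ℝ) < ((p1*q2 : ℕ):ℝ) := by exact_mod_cast hD
    push_cast at this; rw [hDr]; linarith
  obtain ⟨N, hN⟩ := exists_nat_gt (Dr / (ε * ((p1:ℝ) + p2)))
  refine ⟨N, fun A B hB hP hA => ?_⟩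
  have hA0 : (0:ℝ) < A := by
    have h1 : 0 < Dr / (ε * ((p1:ℝ) + p2)) := by positivity
    have h2 : (N:ℝ) ≤ A := by exact_mod_cast hA
    linarith
  have hZ := ppos_bound hp1 hq2 hD hB hP
  have hZR : |(B:ℝ)*((p1:ℝ)+p2) - (A:ℝ)*((q1:ℝ)+q2)| < Dr := by
    rw [hDr]
    exact_mod_cast hZ
  have key : (B:ℝ)/A - ((q1:ℝ)+q2)/((p1:ℝ)+p2)
      = ((B:ℝ)*((p1:ℝ)+p2) - (A:ℝ)*((q1:ℝ)+q2))/((A:ℝ)*((p1:ℝ)+p2)) := by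
    field_simp
  rw [key, abs_div, abs_of_pos (mul_pos hA0 hP0)]
  rw [div_lt_iff₀ (by positivity)]
  have hchain : Dr < ε * ((A:ℝ) * ((p1:ℝ)+p2)) := by
    have h2 : (N:ℝ) ≤ A := by exact_mod_cast hA
    have h3 : Dr / (ε * ((p1:ℝ) + p2)) < (A:ℝ) := lt_of_lt_of_le hN h2
    have h4 : 0 < ε * ((p1:ℝ) + p2) := by positivity
    rw [div_lt_iff₀ h4] at h3
    calc Dr < (A:ℝ) * (ε * ((p1:ℝ)+p2)) := h3
      _ = ε * ((A:ℝ) * ((p1:ℝ)+p2)) := by ring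
  linarith
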